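/- Let ρ > 0 and p₁ = (x₁, y₁) ∈ ℝ² with d₁₂ := ‖p₁‖ ≥ 2ρ. Define L₁(θ) = √(d₁₂² − 2ρ(x₁ sin θ − y₁ cos θ)), φ₁(θ) = atan2(y₁ + ρ cos θ, x₁ − ρ sin θ) + arctan(ρ / L₁(θ)), and D₁(θ) = ρ(φ₁(θ) − θ − π) + L₁(θ), which is the length of the SR Dubins path from p₁ to the origin arriving with heading θ (obtained by reversing the LS path that starts at the origin with heading θ + π, turns left along the circle of radius ρ centered at (ρ sin θ, −ρ cos θ) through angle τ₁(θ) = φ₁(θ) − θ − π, and goes straight to p₁). Then on any open interval of θ on which L₁(θ) > 0 and φ₁(θ) − θ − π ∈ (0, 2π), the function D₁ is differentiable and D₁′(θ) = −ρ(1 − cos(φ₁(θ) − θ − π)). In particular −2ρ ≤ D₁′(θ) ≤ 0. -/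

import Mathlib

set_option linter.all false


/-- Four-quadrant arctangent: `atan2 y x` is the argument of the complex number `x + y i`. -/
noncomputable def atan2 (y x : ℝ) : ℝ := Complex.arg ⟨x, y⟩

/-- Tangent-segment length of the SR Dubins path from `p₁ = (x₁, y₁)` to the origin
arriving with heading `θ`: `L₁(θ) = √(‖p₁‖² − 2ρ(x₁ sin θ − y₁ cos θ))`. -/
noncomputable def Lsr (ρ x₁ y₁ θ : ℝ) : ℝ :=
  Real.sqrt (Real.sqrt (x₁ ^ 2 + y₁ ^ 2) ^ 2 - 2 * ρ * (x₁ * Real.sin θ - y₁ * Real.cos θ))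

/-- Heading along the straight segment of the reversed (LS) path:
`φ₁(θ) = atan2(y₁ + ρ cos θ, x₁ − ρ sin θ) + arctan(ρ / L₁(θ))`. -/
noncomputable def φsr (ρ x₁ y₁ θ : ℝ) : ℝ :=
  atan2 (y₁ + ρ * Real.cos θ) (x₁ - ρ * Real.sin θ) + Real.arctan (ρ / Lsr ρ x₁ y₁ θ)

/-- Total SR Dubins path length `D₁(θ) = ρ(φ₁(θ) − θ − π) + L₁(θ)`. -/
noncomputable def Dsr (ρ x₁ y₁ θ : ℝ) : ℝ :=
  ρ * (φsr ρ x₁ y₁ θ - θ - Real.pi) + Lsr ρ x₁ y₁ θ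

/-- auxiliary smooth formula for S -/
noncomputable def Sfn (ρ x y θ : ℝ) : ℝ :=
  x ^ 2 + y ^ 2 - 2 * ρ * (x * Real.sin θ - y * Real.cos θ)

lemma Lsr_eq (ρ x₁ y₁ θ : ℝ) : Lsr ρ x₁ y₁ θ = Real.sqrt (Sfn ρ x₁ y₁ θ) := by
  unfold Lsr Sfn
  rw [Real.sq_sqrt (by positivity)]

noncomputable def Cfn (ρ x y θ : ℝ) : ℝ :=
  ((x - ρ * Real.sin θ) * Real.sqrt (Sfn ρ x y θ) - (y + ρ * Real.cos θ) * ρ) /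
    (Sfn ρ x y θ + ρ ^ 2)

noncomputable def Sφfn (ρ x y θ : ℝ) : ℝ :=
  ((y + ρ * Real.cos θ) * Real.sqrt (Sfn ρ x y θ) + (x - ρ * Real.sin θ) * ρ) /
    (Sfn ρ x y θ + ρ ^ 2)

noncomputable def cτfn (ρ x y θ : ℝ) : ℝ :=
  -(Cfn ρ x y θ * Real.cos θ + Sφfn ρ x y θ * Real.sin θ)

noncomputable def sτfn (ρ x y θ : ℝ) : ℝ :=
  -(Sφfn ρ x y θ * Real.cos θ - Cfn ρ x y θ * Real.sin θ)

lemma cos_sin_phi (ρ x y θ : ℝ) (hρ : 0 < ρ) (hS : 0 < Sfn ρ x y θ) :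
    Real.cos (φsr ρ x y θ) = Cfn ρ x y θ ∧ Real.sin (φsr ρ x y θ) = Sφfn ρ x y θ := by
  have hSdef : Sfn ρ x y θ = x ^ 2 + y ^ 2 - 2 * ρ * (x * Real.sin θ - y * Real.cos θ) := rfl
  set S := Sfn ρ x y θ with hS2
  set u := x - ρ * Real.sin θ with hu
  set v := y + ρ * Real.cos θ with hv
  set L := Real.sqrt S with hLdef
  have hLpos : 0 < L := Real.sqrt_pos.mpr hS
  have hL2 : L ^ 2 = S := Real.sq_sqrt hS.le
  have huv : u ^ 2 + v ^ 2 = S + ρ ^ 2 := by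
    have hsc := Real.sin_sq_add_cos_sq θ
    rw [hu, hv, hSdef]; nlinarith [hsc]
  set z : ℂ := ⟨u, v⟩ with hz
  have hznorm : Complex.normSq z = S + ρ ^ 2 := by
    rw [Complex.normSq_mk]; nlinarith [huv]
  have hz0 : z ≠ 0 := by
    intro h
    rw [h, map_zero] at hznorm
    nlinarith
  have habs : ‖z‖ = Real.sqrt (S + ρ ^ 2) := by
    rw [Complex.norm_def, hznorm]
  have hRpos : 0 < Real.sqrt (S + ρ ^ 2) := Real.sqrt_pos.mpr (by nlinarith)
  have hR2 : Real.sqrt (S + ρ ^ 2) * Real.sqrt (S + ρ ^ 2) = S + ρ ^ 2 :=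
    Real.mul_self_sqrt (by nlinarith)
  have hfrac : Real.sqrt (1 + (ρ / L) ^ 2) = Real.sqrt (S + ρ ^ 2) / L := by
    rw [eq_div_iff hLpos.ne', ← Real.sqrt_sq hLpos.le, ← Real.sqrt_mul (by positivity)]
    congr 1
    field_simp
    rw [Real.sq_sqrt (by positivity), hL2]
  have hca : Real.cos (Real.arctan (ρ / L)) = L / Real.sqrt (S + ρ ^ 2) := by
    rw [Real.cos_arctan, hfrac]
    field_simp
  have hsa : Real.sin (Real.arctan (ρ / L)) = ρ / Real.sqrt (S + ρ ^ 2) := by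
    rw [Real.sin_arctan, hfrac]
    field_simp
  have hφ : φsr ρ x y θ = Complex.arg z + Real.arctan (ρ / L) := by
    unfold φsr atan2
    rw [Lsr_eq, ← hS2, ← hLdef, ← hu, ← hv]
  have hcz : Real.cos (Complex.arg z) = u / Real.sqrt (S + ρ ^ 2) := by
    rw [Complex.cos_arg hz0, habs]
  have hsz : Real.sin (Complex.arg z) = v / Real.sqrt (S + ρ ^ 2) := by
    rw [Complex.sin_arg, habs]
  constructor
  · rw [hφ, Real.cos_add, hcz, hsz, hca, hsa]
    unfold Cfn
    rw [← hS2, ← hu, ← hv, ← hLdef]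
    field_simp
    try rw [hR2]
    rw [Real.sq_sqrt (by linarith [sq_nonneg ρ])]
    try ring
  · rw [hφ, Real.sin_add, hcz, hsz, hca, hsa]
    unfold Sφfn
    rw [← hS2, ← hu, ← hv, ← hLdef]
    field_simp
    try rw [hR2]
    rw [Real.sq_sqrt (by linarith [sq_nonneg ρ])]
    try ring

lemma cos_sin_tau (ρ x y θ : ℝ) (hρ : 0 < ρ) (hS : 0 < Sfn ρ x y θ) :
    Real.cos (φsr ρ x y θ - θ - Real.pi) = cτfn ρ x y θ ∧
    Real.sin (φsr ρ x y θ - θ - Real.pi) = sτfn ρ x y θ := by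
  obtain ⟨hc, hs⟩ := cos_sin_phi ρ x y θ hρ hS
  have e1 : φsr ρ x y θ - θ - Real.pi = (φsr ρ x y θ - θ) - Real.pi := by ring
  constructor
  · rw [e1, Real.cos_sub, Real.cos_pi, Real.sin_pi, Real.cos_sub, hc, hs]
    unfold cτfn; ring
  · rw [e1, Real.sin_sub, Real.cos_pi, Real.sin_pi, Real.sin_sub, hc, hs]
    unfold sτfn; ring

lemma liftDeriv {f : ℝ → ℝ} {x₀ c' s' : ℝ} (hcont : ContinuousAt f x₀)
    (hc : HasDerivAt (fun x => Real.cos (f x)) c' x₀)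
    (hs : HasDerivAt (fun x => Real.sin (f x)) s' x₀) :
    HasDerivAt f (Real.cos (f x₀) * s' - Real.sin (f x₀) * c') x₀ := by
  set g : ℝ → ℝ := fun x => f x₀ + Real.arctan
      ((Real.sin (f x) * Real.cos (f x₀) - Real.cos (f x) * Real.sin (f x₀)) /
       (Real.cos (f x) * Real.cos (f x₀) + Real.sin (f x) * Real.sin (f x₀))) with hg
  have hev : ∀ᶠ x in nhds x₀, |f x - f x₀| < Real.pi / 2 := by
    have h1 := Metric.tendsto_nhds.mp hcont.tendsto (Real.pi / 2) (by positivity)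
    filter_upwards [h1] with x hx
    simpa [Real.dist_eq] using hx
  have heq : f =ᶠ[nhds x₀] g := by
    filter_upwards [hev] with x hx
    have h1 : -(Real.pi/2) < f x - f x₀ := by
      have := abs_lt.mp hx; linarith [this.1]
    have h2 : f x - f x₀ < Real.pi/2 := (abs_lt.mp hx).2
    have ht : Real.arctan (Real.tan (f x - f x₀)) = f x - f x₀ :=
      Real.arctan_tan h1 h2
    have : Real.tan (f x - f x₀) =
        (Real.sin (f x) * Real.cos (f x₀) - Real.cos (f x) * Real.sin (f x₀)) /
        (Real.cos (f x) * Real.cos (f x₀) + Real.sin (f x) * Real.sin (f x₀)) := by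
      rw [Real.tan_eq_sin_div_cos, Real.sin_sub, Real.cos_sub]
    rw [hg]; simp only []
    rw [← this, ht]; ring
  have hN : HasDerivAt (fun x => Real.sin (f x) * Real.cos (f x₀) - Real.cos (f x) * Real.sin (f x₀))
      (s' * Real.cos (f x₀) - c' * Real.sin (f x₀)) x₀ :=
    (hs.mul_const _).sub (hc.mul_const _)
  have hD : HasDerivAt (fun x => Real.cos (f x) * Real.cos (f x₀) + Real.sin (f x) * Real.sin (f x₀))
      (c' * Real.cos (f x₀) + s' * Real.sin (f x₀)) x₀ :=
    (hc.mul_const _).add (hs.mul_const _)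
  have hD0 : (Real.cos (f x₀) * Real.cos (f x₀) + Real.sin (f x₀) * Real.sin (f x₀)) = 1 := by
    have := Real.sin_sq_add_cos_sq (f x₀); nlinarith [this]
  have hq : HasDerivAt (fun x =>
      (Real.sin (f x) * Real.cos (f x₀) - Real.cos (f x) * Real.sin (f x₀)) /
      (Real.cos (f x) * Real.cos (f x₀) + Real.sin (f x) * Real.sin (f x₀)))
      (((s' * Real.cos (f x₀) - c' * Real.sin (f x₀)) *
        (Real.cos (f x₀) * Real.cos (f x₀) + Real.sin (f x₀) * Real.sin (f x₀)) -
        (Real.sin (f x₀) * Real.cos (f x₀) - Real.cos (f x₀) * Real.sin (f x₀)) *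
        (c' * Real.cos (f x₀) + s' * Real.sin (f x₀))) /
        (Real.cos (f x₀) * Real.cos (f x₀) + Real.sin (f x₀) * Real.sin (f x₀)) ^ 2) x₀ :=
    hN.div hD (by rw [hD0]; norm_num)
  have hq0 : (Real.sin (f x₀) * Real.cos (f x₀) - Real.cos (f x₀) * Real.sin (f x₀)) /
      (Real.cos (f x₀) * Real.cos (f x₀) + Real.sin (f x₀) * Real.sin (f x₀)) = 0 := by
    rw [hD0]; ring
  have harct := Real.hasDerivAt_arctan
      ((Real.sin (f x₀) * Real.cos (f x₀) - Real.cos (f x₀) * Real.sin (f x₀)) /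
      (Real.cos (f x₀) * Real.cos (f x₀) + Real.sin (f x₀) * Real.sin (f x₀)))
  have hg' : HasDerivAt g (Real.cos (f x₀) * s' - Real.sin (f x₀) * c') x₀ := by
    have := (harct.comp x₀ hq).const_add (f x₀)
    refine this.congr_deriv ?_
    rw [hq0, hD0]
    ring
  exact hg'.congr_of_eventuallyEq heq

/- STATEMENT 7: on any open interval of θ on which L₁(θ) > 0 and
φ₁(θ) − θ − π ∈ (0, 2π), the SR path length D₁ is differentiable with
D₁′(θ) = −ρ(1 − cos(φ₁(θ) − θ − π)); in particular −2ρ ≤ D₁′(θ) ≤ 0. -/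
set_option maxRecDepth 100000 in
set_option maxHeartbeats 4000000 in
theorem stmt7 (ρ x₁ y₁ a b : ℝ) (hρ : 0 < ρ)
    (hd : 2 * ρ ≤ Real.sqrt (x₁ ^ 2 + y₁ ^ 2))
    (hL : ∀ θ ∈ Set.Ioo a b, 0 < Lsr ρ x₁ y₁ θ)
    (hτ : ∀ θ ∈ Set.Ioo a b, φsr ρ x₁ y₁ θ - θ - Real.pi ∈ Set.Ioo 0 (2 * Real.pi)) :
    ∀ θ ∈ Set.Ioo a b,
      HasDerivAt (Dsr ρ x₁ y₁) (-(ρ * (1 - Real.cos (φsr ρ x₁ y₁ θ - θ - Real.pi)))) θ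
      ∧ -(2 * ρ) ≤ -(ρ * (1 - Real.cos (φsr ρ x₁ y₁ θ - θ - Real.pi)))
      ∧ -(ρ * (1 - Real.cos (φsr ρ x₁ y₁ θ - θ - Real.pi))) ≤ 0 := by
  intro θ₀ hθ₀
  refine ⟨?_, ?_, ?_⟩
  · -- main derivative claim
    have hmem : Set.Ioo a b ∈ nhds θ₀ := isOpen_Ioo.mem_nhds hθ₀
    have hSpos : ∀ θ ∈ Set.Ioo a b, 0 < Sfn ρ x₁ y₁ θ := by
      intro θ hθ
      have := hL θ hθ
      rw [Lsr_eq] at this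
      exact Real.sqrt_pos.mp this
    have hS0 : 0 < Sfn ρ x₁ y₁ θ₀ := hSpos θ₀ hθ₀
    have hR0 : (0:ℝ) < Sfn ρ x₁ y₁ θ₀ + ρ ^ 2 := by nlinarith
    -- derivative of Sfn
    have hS' : HasDerivAt (fun θ => Sfn ρ x₁ y₁ θ)
        (-(2 * ρ * (x₁ * Real.cos θ₀ + y₁ * Real.sin θ₀))) θ₀ := by
      have h1 := ((Real.hasDerivAt_sin θ₀).const_mul x₁).sub
        ((Real.hasDerivAt_cos θ₀).const_mul y₁)
      have h2 := (h1.const_mul (2 * ρ)).const_sub (x₁ ^ 2 + y₁ ^ 2)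
      unfold Sfn
      refine h2.congr_deriv ?_
      ring
    have hLf : HasDerivAt (fun θ => Real.sqrt (Sfn ρ x₁ y₁ θ))
        (-(ρ * (x₁ * Real.cos θ₀ + y₁ * Real.sin θ₀)) / Real.sqrt (Sfn ρ x₁ y₁ θ₀)) θ₀ := by
      have h := (Real.hasDerivAt_sqrt hS0.ne').comp θ₀ hS'
      refine h.congr_deriv ?_
      have hsq : Real.sqrt (Sfn ρ x₁ y₁ θ₀) ≠ 0 := (Real.sqrt_pos.mpr hS0).ne'
      field_simp
      try ring
    have hu' : HasDerivAt (fun θ => x₁ - ρ * Real.sin θ) (-(ρ * Real.cos θ₀)) θ₀ := by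
      have := ((Real.hasDerivAt_sin θ₀).const_mul ρ).const_sub x₁
      convert this using 1; try ring
    have hv' : HasDerivAt (fun θ => y₁ + ρ * Real.cos θ) (-(ρ * Real.sin θ₀)) θ₀ := by
      have := ((Real.hasDerivAt_cos θ₀).const_mul ρ).const_add y₁
      exact this.congr_deriv (by ring)
    have hRf : HasDerivAt (fun θ => Sfn ρ x₁ y₁ θ + ρ ^ 2)
        (-(2 * ρ * (x₁ * Real.cos θ₀ + y₁ * Real.sin θ₀))) θ₀ := hS'.add_const _
    -- derivative of Cfn
    have hNC := (hu'.mul hLf).sub (hv'.mul_const ρ)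
    have hC' := hNC.div hRf hR0.ne'
    have hCeq : (fun θ => Cfn ρ x₁ y₁ θ) = fun θ =>
        ((x₁ - ρ * Real.sin θ) * Real.sqrt (Sfn ρ x₁ y₁ θ) - (y₁ + ρ * Real.cos θ) * ρ) /
          (Sfn ρ x₁ y₁ θ + ρ ^ 2) := rfl
    replace hC' : HasDerivAt (fun θ => Cfn ρ x₁ y₁ θ) _ θ₀ := hC'
    have hNS := (hv'.mul hLf).add (hu'.mul_const ρ)
    have hSφ' := hNS.div hRf hR0.ne'
    have hSφeq : (fun θ => Sφfn ρ x₁ y₁ θ) = fun θ =>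
        ((y₁ + ρ * Real.cos θ) * Real.sqrt (Sfn ρ x₁ y₁ θ) + (x₁ - ρ * Real.sin θ) * ρ) /
          (Sfn ρ x₁ y₁ θ + ρ ^ 2) := rfl
    replace hSφ' : HasDerivAt (fun θ => Sφfn ρ x₁ y₁ θ) _ θ₀ := hSφ'
    -- derivatives of cτfn, sτfn
    have hcτ' := (((hC'.mul (Real.hasDerivAt_cos θ₀)).add
        (hSφ'.mul (Real.hasDerivAt_sin θ₀)))).neg
    have hsτ' := (((hSφ'.mul (Real.hasDerivAt_cos θ₀)).sub
        (hC'.mul (Real.hasDerivAt_sin θ₀)))).neg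
    have hcτeq : (fun θ => cτfn ρ x₁ y₁ θ) =
        fun θ => -(Cfn ρ x₁ y₁ θ * Real.cos θ + Sφfn ρ x₁ y₁ θ * Real.sin θ) := rfl
    have hsτeq : (fun θ => sτfn ρ x₁ y₁ θ) =
        fun θ => -(Sφfn ρ x₁ y₁ θ * Real.cos θ - Cfn ρ x₁ y₁ θ * Real.sin θ) := rfl
    replace hcτ' : HasDerivAt (fun θ => cτfn ρ x₁ y₁ θ) _ θ₀ := hcτ'
    replace hsτ' : HasDerivAt (fun θ => sτfn ρ x₁ y₁ θ) _ θ₀ := hsτ'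
    -- τ function
    have hτ0 := hτ θ₀ hθ₀
    have hcosall : ∀ θ ∈ Set.Ioo a b, Real.cos ((φsr ρ x₁ y₁ θ - θ - Real.pi)) = cτfn ρ x₁ y₁ θ := fun θ hθ =>
      (cos_sin_tau ρ x₁ y₁ θ hρ (hSpos θ hθ)).1
    have hsinall : ∀ θ ∈ Set.Ioo a b, Real.sin ((φsr ρ x₁ y₁ θ - θ - Real.pi)) = sτfn ρ x₁ y₁ θ := fun θ hθ =>
      (cos_sin_tau ρ x₁ y₁ θ hρ (hSpos θ hθ)).2
    -- cτfn θ₀ < 1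
    have hcτlt : cτfn ρ x₁ y₁ θ₀ < 1 := by
      rw [← hcosall θ₀ hθ₀]
      rcases lt_or_eq_of_le (Real.cos_le_one ((φsr ρ x₁ y₁ θ₀ - θ₀ - Real.pi))) with h | h
      · exact h
      · exfalso
        rw [Real.cos_eq_one_iff] at h
        obtain ⟨n, hn⟩ := h
        have h1 : (0:ℝ) < (φsr ρ x₁ y₁ θ₀ - θ₀ - Real.pi) := hτ0.1
        have h2 : (φsr ρ x₁ y₁ θ₀ - θ₀ - Real.pi) < 2 * Real.pi := hτ0.2
        have hpi := Real.pi_pos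
        rw [← hn] at h1 h2
        have hn0 : (0:ℝ) < n := by
          by_contra hc
          push_neg at hc
          have : (n:ℝ) * (2 * Real.pi) ≤ 0 := by
            apply mul_nonpos_of_nonpos_of_nonneg
            · exact_mod_cast hc
            · positivity
          linarith
        have hn1 : (n:ℝ) < 1 := by
          by_contra hc
          push_neg at hc
          nlinarith
        have : (0:ℤ) < n := by exact_mod_cast hn0
        have : (1:ℤ) ≤ n := this
        have : (1:ℝ) ≤ (n:ℝ) := by exact_mod_cast this
        linarith
    -- continuity of fτ at θ₀ via arccos formula
    have hcont : ContinuousAt (fun θ => φsr ρ x₁ y₁ θ - θ - Real.pi) θ₀ := by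
      set T : ℝ → ℝ := fun θ => 2 * Real.arccos
          (sτfn ρ x₁ y₁ θ / (2 * Real.sqrt ((1 - cτfn ρ x₁ y₁ θ) / 2))) with hT
      have hTeq : ∀ θ ∈ Set.Ioo a b, (φsr ρ x₁ y₁ θ - θ - Real.pi) = T θ := by
        intro θ hθ
        have hτθ := hτ θ hθ
        have h1 : (0:ℝ) < (φsr ρ x₁ y₁ θ - θ - Real.pi) := hτθ.1
        have h2 : (φsr ρ x₁ y₁ θ - θ - Real.pi) < 2 * Real.pi := hτθ.2
        have hhalfpos : 0 < (φsr ρ x₁ y₁ θ - θ - Real.pi) / 2 := by linarith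
        have hhalflt : (φsr ρ x₁ y₁ θ - θ - Real.pi) / 2 < Real.pi := by linarith
        have hsinhalf : Real.sin ((φsr ρ x₁ y₁ θ - θ - Real.pi) / 2) = Real.sqrt ((1 - Real.cos ((φsr ρ x₁ y₁ θ - θ - Real.pi))) / 2) :=
          Real.sin_half_eq_sqrt (by linarith) (by linarith)
        have hsinhalfpos : 0 < Real.sin ((φsr ρ x₁ y₁ θ - θ - Real.pi) / 2) :=
          Real.sin_pos_of_pos_of_lt_pi hhalfpos hhalflt
        have hdouble : Real.sin ((φsr ρ x₁ y₁ θ - θ - Real.pi)) = 2 * Real.sin ((φsr ρ x₁ y₁ θ - θ - Real.pi) / 2) * Real.cos ((φsr ρ x₁ y₁ θ - θ - Real.pi) / 2) := by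
          rw [show (φsr ρ x₁ y₁ θ - θ - Real.pi) = 2 * ((φsr ρ x₁ y₁ θ - θ - Real.pi) / 2) by ring, Real.sin_two_mul]
          ring_nf
        have harg : sτfn ρ x₁ y₁ θ / (2 * Real.sqrt ((1 - cτfn ρ x₁ y₁ θ) / 2)) =
            Real.cos ((φsr ρ x₁ y₁ θ - θ - Real.pi) / 2) := by
          rw [← hsinall θ hθ, ← hcosall θ hθ, ← hsinhalf, hdouble]
          field_simp
        rw [hT]
        simp only []
        rw [harg, Real.arccos_cos hhalfpos.le hhalflt.le]
        ring
      have hTc : ContinuousAt T θ₀ := by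
        have hccτ : ContinuousAt (fun θ => cτfn ρ x₁ y₁ θ) θ₀ := hcτ'.continuousAt
        have hcsτ : ContinuousAt (fun θ => sτfn ρ x₁ y₁ θ) θ₀ := hsτ'.continuousAt
        have hden : (2 : ℝ) * Real.sqrt ((1 - cτfn ρ x₁ y₁ θ₀) / 2) ≠ 0 := by
          have : 0 < Real.sqrt ((1 - cτfn ρ x₁ y₁ θ₀) / 2) :=
            Real.sqrt_pos.mpr (by linarith)
          positivity
        apply ContinuousAt.mul continuousAt_const
        apply Real.continuous_arccos.continuousAt.comp
        apply ContinuousAt.div hcsτ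
        · exact (continuousAt_const.mul ((Real.continuous_sqrt.continuousAt).comp
            (((continuousAt_const.sub hccτ)).div_const 2)))
        · exact hden
      apply hTc.congr
      filter_upwards [hmem] with θ hθ
      exact (hTeq θ hθ).symm
    -- HasDerivAt of cos ∘ fτ and sin ∘ fτ
    have hevc : (fun θ => Real.cos (φsr ρ x₁ y₁ θ - θ - Real.pi)) =ᶠ[nhds θ₀]
        fun θ => cτfn ρ x₁ y₁ θ := by
      filter_upwards [hmem] with θ hθ
      exact hcosall θ hθ
    have hevs : (fun θ => Real.sin (φsr ρ x₁ y₁ θ - θ - Real.pi)) =ᶠ[nhds θ₀]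
        fun θ => sτfn ρ x₁ y₁ θ := by
      filter_upwards [hmem] with θ hθ
      exact hsinall θ hθ
    have hcosf := hcτ'.congr_of_eventuallyEq hevc
    have hsinf := hsτ'.congr_of_eventuallyEq hevs
    have hlift := liftDeriv hcont hcosf hsinf
    have hDeq : Dsr ρ x₁ y₁ = fun θ =>
        ρ * (φsr ρ x₁ y₁ θ - θ - Real.pi) + Real.sqrt (Sfn ρ x₁ y₁ θ) := by
      funext θ
      unfold Dsr
      rw [Lsr_eq]
    have hfin := (hlift.const_mul ρ).add hLf
    replace hfin : HasDerivAt (fun θ =>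
        ρ * (φsr ρ x₁ y₁ θ - θ - Real.pi) + Real.sqrt (Sfn ρ x₁ y₁ θ)) _ θ₀ := hfin
    rw [← hDeq] at hfin
    refine hfin.congr_deriv ?_
    symm
    rw [hcosall θ₀ hθ₀, hsinall θ₀ hθ₀]
    simp only [cτfn, sτfn, Cfn, Sφfn, Pi.add_apply, Pi.sub_apply, Pi.mul_apply]
    have hlpos : 0 < Real.sqrt (Sfn ρ x₁ y₁ θ₀) := Real.sqrt_pos.mpr hS0
    have hl2 : Real.sqrt (Sfn ρ x₁ y₁ θ₀) ^ 2 = Sfn ρ x₁ y₁ θ₀ := Real.sq_sqrt hS0.le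
    set l := Real.sqrt (Sfn ρ x₁ y₁ θ₀) with hldef
    rw [← hl2]
    set A := Real.cos θ₀ with hA
    set B := Real.sin θ₀ with hB
    have h1 : B ^ 2 + A ^ 2 = 1 := Real.sin_sq_add_cos_sq θ₀
    have h2 : l ^ 2 = x₁ ^ 2 + y₁ ^ 2 - 2 * ρ * (x₁ * B - y₁ * A) := by
      rw [hB, hA, hl2]; rfl
    have hRne : l ^ 2 + ρ ^ 2 ≠ 0 := by positivity
    have hlne : l ≠ 0 := hlpos.ne'
    field_simp
    linear_combination ((-1 * l^5) + (1 * l^3 * A^3 * y₁ * ρ) + (-1 * l^3 * A^2 * B * x₁ * ρ) + (1 * l^3 * A^2 * x₁^2) + (1 * l^3 * A^2 * y₁^2) + (1 * l^3 * A^2 * ρ^2) + (1 * l^3 * A * B^2 * y₁ * ρ) + (-1 * l^3 * A * y₁ * ρ) + (-1 * l^3 * B^3 * x₁ * ρ) + (1 * l^3 * B^2 * x₁^2) + (1 * l^3 * B^2 * y₁^2) + (1 * l^3 * B^2 * ρ^2) + (1 * l^3 * B * x₁ * ρ) + (-1 * l^3 * x₁^2) + (-1 * l^3 * y₁^2) +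 (-3 * l^3 * ρ^2) + (1 * l^2 * A * x₁ * ρ^2) + (1 * l^2 * B * y₁ * ρ^2) + (2 * l * A^4 * y₁^2 * ρ^2) + (-4 * l * A^3 * B * x₁ * y₁ * ρ^2) + (3 * l * A^3 * x₁^2 * y₁ * ρ) + (3 * l * A^3 * y₁^3 * ρ) + (4 * l * A^3 * y₁ * ρ^3) + (2 * l * A^2 * B^2 * x₁^2 * ρ^2) + (2 * l * A^2 * B^2 * y₁^2 * ρ^2) + (-3 * l * A^2 * B * x₁^3 * ρ) + (-3 * l * A^2 * B * x₁ * y₁^2 * ρ) + (-4 * l * A^2 * B * x₁ * ρ^3) + (1 * l * A^2 * x₁^4) + (2 * l * A^2 * x₁^2 * y₁^2) + (3 * l * A^2 * x₁^2 * ρ^2) + (1 * l * A^2 * y₁^4) + (1 * l * A^2 * y₁^2 * ρ^2) + (2 * l * A^2 * ρ^4) + (-4 * l * A * B^3 * x₁ * y₁ * ρ^2) + (3 * l * A * B^2 * x₁^2 * y₁ * ρ) + (3 * l * A * B^2 * y₁^3 * ρ) + (4 * l * A * B^2 * y₁ * ρ^3) + (4 * l * A * B * x₁ * y₁ * ρ^2)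 + (-3 * l * A * x₁^2 * y₁ * ρ) + (-3 * l * A * y₁^3 * ρ) + (-4 * l * A * y₁ * ρ^3) + (2 * l * B^4 * x₁^2 * ρ^2) + (-3 * l * B^3 * x₁^3 * ρ) + (-3 * l * B^3 * x₁ * y₁^2 * ρ) + (-4 * l * B^3 * x₁ * ρ^3) + (1 * l * B^2 * x₁^4) + (2 * l * B^2 * x₁^2 * y₁^2) + (1 * l * B^2 * x₁^2 * ρ^2) + (1 * l * B^2 * y₁^4) + (3 * l * B^2 * y₁^2 * ρ^2) + (2 * l * B^2 * ρ^4) + (3 * l * B * x₁^3 * ρ) + (3 * l * B * x₁ * y₁^2 * ρ) + (4 * l * B * x₁ * ρ^3) + (-1 * l * x₁^4) + (-2 * l * x₁^2 * y₁^2) + (-3 * l * x₁^2 * ρ^2) + (-1 * l * y₁^4) + (-3 * l * y₁^2 * ρ^2) + (-3 * l * ρ^4) + (-1 * A^5 * x₁ * ρ^4) + (-1 * A^4 * B * y₁ * ρ^4) + (-2 * A^4 * x₁ * y₁ * ρ^3) + (-2 * A^3 * B^2 * x₁ * ρ^4) + (2 * A^3 * B * x₁^2 * ρ^3) + (-2 *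 A^3 * B * y₁^2 * ρ^3) + (-1 * A^3 * x₁^3 * ρ^2) + (-1 * A^3 * x₁ * y₁^2 * ρ^2) + (-2 * A^2 * B^3 * y₁ * ρ^4) + (-1 * A^2 * B * x₁^2 * y₁ * ρ^2) + (-1 * A^2 * B * y₁^3 * ρ^2) + (2 * A^2 * x₁ * y₁ * ρ^3) + (-1 * A * B^4 * x₁ * ρ^4) + (2 * A * B^3 * x₁^2 * ρ^3) + (-2 * A * B^3 * y₁^2 * ρ^3) + (-1 * A * B^2 * x₁^3 * ρ^2) + (-1 * A * B^2 * x₁ * y₁^2 * ρ^2) + (-2 * A * B * x₁^2 * ρ^3) + (2 * A * B * y₁^2 * ρ^3) + (1 * A * x₁^3 * ρ^2) + (1 * A * x₁ * y₁^2 * ρ^2) + (2 * A * x₁ * ρ^4) + (-1 * B^5 * y₁ * ρ^4) + (2 * B^4 * x₁ * y₁ * ρ^3) + (-1 * B^3 * x₁^2 * y₁ * ρ^2) + (-1 * B^3 * y₁^3 * ρ^2) + (-2 * B^2 * x₁ * y₁ * ρ^3) + (1 * B * x₁^2 * y₁ * ρ^2) + (1 * B * y₁^3 * ρ^2) + (2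 * B * y₁ * ρ^4)) * h2 + ((4 * l * A^3 * y₁^3 * ρ^3) + (-12 * l * A^2 * B * x₁ * y₁^2 * ρ^3) + (8 * l * A^2 * x₁^2 * y₁^2 * ρ^2) + (8 * l * A^2 * y₁^4 * ρ^2) + (8 * l * A^2 * y₁^2 * ρ^4) + (12 * l * A * B^2 * x₁^2 * y₁ * ρ^3) + (-16 * l * A * B * x₁^3 * y₁ * ρ^2) + (-16 * l * A * B * x₁ * y₁^3 * ρ^2) + (-16 * l * A * B * x₁ * y₁ * ρ^4) + (5 * l * A * x₁^4 * y₁ * ρ) + (10 * l * A * x₁^2 * y₁^3 * ρ) + (10 * l * A * x₁^2 * y₁ * ρ^3) + (5 * l * A * y₁^5 * ρ) + (10 * l * A * y₁^3 * ρ^3) + (5 * l * A * y₁ * ρ^5) + (-4 * l * B^3 * x₁^3 * ρ^3) + (8 * l * B^2 * x₁^4 * ρ^2) + (8 * l * B^2 * x₁^2 * y₁^2 * ρ^2) + (8 * l * B^2 * x₁^2 * ρ^4) + (-5 * l * B * x₁^5 * ρ) + (-10 * l * B * x₁^3 * y₁^2 * ρ) + (-10 * l * B * x₁^3 * ρ^3)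 + (-5 * l * B * x₁ * y₁^4 * ρ) + (-10 * l * B * x₁ * y₁^2 * ρ^3) + (-5 * l * B * x₁ * ρ^5) + (1 * l * x₁^6) + (3 * l * x₁^4 * y₁^2) + (3 * l * x₁^4 * ρ^2) + (3 * l * x₁^2 * y₁^4) + (6 * l * x₁^2 * y₁^2 * ρ^2) + (3 * l * x₁^2 * ρ^4) + (1 * l * y₁^6) + (3 * l * y₁^4 * ρ^2) + (3 * l * y₁^2 * ρ^4) + (1 * l * ρ^6) + (-2 * A^4 * x₁ * y₁ * ρ^5) + (2 * A^3 * B * x₁^2 * ρ^5) + (-2 * A^3 * B * y₁^2 * ρ^5) + (-1 * A^3 * x₁^3 * ρ^4) + (-5 * A^3 * x₁ * y₁^2 * ρ^4) + (-1 * A^3 * x₁ * ρ^6) + (7 * A^2 * B * x₁^2 * y₁ * ρ^4) + (-5 * A^2 * B * y₁^3 * ρ^4) + (-1 * A^2 * B * y₁ * ρ^6) + (-4 * A^2 * x₁^3 * y₁ * ρ^3) + (-4 * A^2 * x₁ * y₁^3 * ρ^3) + (-4 * A^2 * x₁ * y₁ * ρ^5) + (2 * A * B^3 * x₁^2 * ρ^5)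 + (-2 * A * B^3 * y₁^2 * ρ^5) + (-5 * A * B^2 * x₁^3 * ρ^4) + (7 * A * B^2 * x₁ * y₁^2 * ρ^4) + (-1 * A * B^2 * x₁ * ρ^6) + (4 * A * B * x₁^4 * ρ^3) + (4 * A * B * x₁^2 * ρ^5) + (-4 * A * B * y₁^4 * ρ^3) + (-4 * A * B * y₁^2 * ρ^5) + (-1 * A * x₁^5 * ρ^2) + (-2 * A * x₁^3 * y₁^2 * ρ^2) + (-2 * A * x₁^3 * ρ^4) + (-1 * A * x₁ * y₁^4 * ρ^2) + (-2 * A * x₁ * y₁^2 * ρ^4) + (-1 * A * x₁ * ρ^6) + (2 * B^4 * x₁ * y₁ * ρ^5) + (-5 * B^3 * x₁^2 * y₁ * ρ^4) + (-1 * B^3 * y₁^3 * ρ^4) + (-1 * B^3 * y₁ * ρ^6) + (4 * B^2 * x₁^3 * y₁ * ρ^3) + (4 * B^2 * x₁ * y₁^3 * ρ^3) + (4 * B^2 * x₁ * y₁ * ρ^5) + (-1 * B * x₁^4 * y₁ * ρ^2) + (-2 * B * x₁^2 * y₁^3 * ρ^2) + (-2 * B * x₁^2 * y₁ * ρ^4)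 + (-1 * B * y₁^5 * ρ^2) + (-2 * B * y₁^3 * ρ^4) + (-1 * B * y₁ * ρ^6)) * h1
  · have h1 := Real.neg_one_le_cos (φsr ρ x₁ y₁ θ₀ - θ₀ - Real.pi)
    nlinarith
  · have h1 := Real.cos_le_one (φsr ρ x₁ y₁ θ₀ - θ₀ - Real.pi)
    nlinarith
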